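/- Let A be a unital Banach algebra, M a unital left A-module, and δ : A → M linear. If Aδ(A⁻¹) + A⁻¹δ(A) = δ(I) for every invertible A ∈ A, then δ is a Jordan left derivation, i.e., δ(A²) = 2Aδ(A) for all A ∈ A. -/
import Mathlib


open MulOpposite

/-- If `A δ(A⁻¹) + A⁻¹ δ(A) = δ(I)` for every invertible `A` in a unital Banach algebra,
then `δ` is a Jordan left derivation: `δ(A²) = 2 A δ(A)`. -/
theorem stmt7 {A : Type*} {M : Type*}
    [NormedRing A] [NormedAlgebra ℂ A] [CompleteSpace A]
    [AddCommGroup M] [Module ℂ M] [Module A M] [IsScalarTower ℂ A M]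
    (δ : A →ₗ[ℂ] M)
    (h : ∀ a : Aˣ, (a : A) • δ ((a⁻¹ : Aˣ) : A) + ((a⁻¹ : Aˣ) : A) • δ (a : A) = δ 1) :
    ∀ a : A, δ (a * a) = (2 : ℂ) • (a • δ a) := by
  -- δ 1 = 0
  have h1 : δ 1 = 0 := by
    have h0 := h 1
    rw [inv_one] at h0
    simp only [Units.val_one, one_smul] at h0
    exact add_eq_right.mp h0
  -- key formula: δ(w⁻¹) = -(w⁻¹ * w⁻¹) • δ(w)
  have key : ∀ w : Aˣ, δ ((w⁻¹ : Aˣ) : A) = -((w⁻¹ * w⁻¹ : Aˣ) • δ (w : A)) := by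
    intro w
    have hw := h w
    rw [h1] at hw
    have h2 := congrArg (fun m => ((w⁻¹ : Aˣ) : A) • m) hw
    simp only [smul_add, smul_smul, Units.inv_mul, one_smul, smul_zero] at h2
    have h3 : δ ((w⁻¹ : Aˣ) : A) + (w⁻¹ * w⁻¹ : Aˣ) • δ (w : A) = 0 := by
      rw [Units.smul_def, Units.val_mul]
      exact h2
    exact eq_neg_of_add_eq_zero_left h3
  intro a
  -- units of the form c•1 - a
  have mkUnit : ∀ c : ℂ, ‖a‖ < ‖c‖ → IsUnit (c • (1:A) - a) := by
    intro c hc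
    have hc0 : c ≠ 0 := by
      intro hh; rw [hh, norm_zero] at hc; exact absurd hc (not_lt.2 (norm_nonneg a))
    have ht : ‖c⁻¹ • a‖ < 1 := by
      rw [norm_smul, norm_inv, inv_mul_lt_iff₀ (lt_of_le_of_lt (norm_nonneg a) hc), mul_one]
      exact hc
    have heq : c • (1:A) - a = (algebraMap ℂ A c) * (1 - c⁻¹ • a) := by
      rw [mul_sub, mul_one, Algebra.algebraMap_eq_smul_one, smul_mul_assoc, one_mul,
        smul_smul, mul_inv_cancel₀ hc0, one_smul]
    rw [heq]
    exact ((isUnit_iff_ne_zero.2 hc0).map (algebraMap ℂ A)).mul (Units.oneSub _ ht).isUnit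
  set c : ℂ := ((‖a‖ + 1 : ℝ) : ℂ) with hcdef
  set d : ℂ := ((‖a‖ + 2 : ℝ) : ℂ) with hddef
  have hnc : ‖a‖ < ‖c‖ := by
    rw [hcdef, Complex.norm_real, Real.norm_eq_abs, abs_of_nonneg (by positivity)]; linarith
  have hnd : ‖a‖ < ‖d‖ := by
    rw [hddef, Complex.norm_real, Real.norm_eq_abs, abs_of_nonneg (by positivity)]; linarith
  have hdc : d - c = 1 := by rw [hcdef, hddef]; push_cast; ring
  have hd2 : d = c + 1 := by rw [hcdef, hddef]; push_cast; ring
  obtain ⟨u, hu⟩ := mkUnit c hnc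
  obtain ⟨v, hv⟩ := mkUnit d hnd
  -- expansion lemma
  have hexp : ∀ x y : ℂ, ((x • (1:A) - a) * (y • (1:A) - a))
      = (x*y) • (1:A) - (x+y) • a + a * a := by
    intro x y
    simp only [sub_mul, mul_sub, smul_mul_assoc, mul_smul_comm, one_mul, mul_one]
    module
  -- u and v commute
  have hpq : (u : A) * v = (v : A) * u := by
    rw [hu, hv, hexp, hexp, mul_comm d c, add_comm d c]
  have hcuv : u * v = v * u := Units.ext (by simpa using hpq)
  -- resolvent identity: (uv)⁻¹ = u⁻¹ - v⁻¹
  have hqp : (v : A) - u = 1 := by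
    rw [hu, hv, sub_sub_sub_cancel_right, ← sub_smul, hdc, one_smul]
  have hres : ((((u*v)⁻¹ : Aˣ)) : A) = ((u⁻¹ : Aˣ) : A) - ((v⁻¹ : Aˣ) : A) := by
    have h4 : ((((u*v)⁻¹ : Aˣ)) : A) = ((v⁻¹ : Aˣ) : A) * ((u⁻¹ : Aˣ) : A) := by
      rw [mul_inv_rev, Units.val_mul]
    rw [h4]
    calc ((v⁻¹ : Aˣ) : A) * ((u⁻¹ : Aˣ) : A)
        = ((v⁻¹ : Aˣ) : A) * (((v : A) - u) * ((u⁻¹ : Aˣ) : A)) := by rw [hqp, one_mul]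
      _ = ((u⁻¹ : Aˣ) : A) - ((v⁻¹ : Aˣ) : A) := by
          rw [sub_mul, Units.mul_inv, mul_sub, mul_one, ← mul_assoc, Units.inv_mul, one_mul]
  -- δ of the inverses
  have hdu : δ (u : A) = - δ a := by
    rw [hu, map_sub, map_smul, h1, smul_zero, zero_sub]
  have hdv : δ (v : A) = - δ a := by
    rw [hv, map_sub, map_smul, h1, smul_zero, zero_sub]
  have h5 : δ ((u⁻¹ : Aˣ) : A) = (u⁻¹ * u⁻¹ : Aˣ) • δ a := by
    rw [key u, hdu, smul_neg, neg_neg]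
  have h6 : δ ((v⁻¹ : Aˣ) : A) = (v⁻¹ * v⁻¹ : Aˣ) • δ a := by
    rw [key v, hdv, smul_neg, neg_neg]
  have hduv' : δ ((((u*v)⁻¹ : Aˣ)) : A)
      = (u⁻¹ * u⁻¹ : Aˣ) • δ a - (v⁻¹ * v⁻¹ : Aˣ) • δ a := by
    rw [hres, map_sub, h5, h6]
  have hduv : δ (((u*v : Aˣ)) : A) = δ (a*a) - (c+d) • δ a := by
    rw [Units.val_mul, hu, hv, hexp, map_add, map_sub, map_smul, map_smul, h1, smul_zero,
      zero_sub]
    abel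
  -- the main equation at the unit u*v
  have E := h (u*v)
  rw [h1, hduv', hduv, ← Units.smul_def (u*v), ← Units.smul_def ((u*v)⁻¹)] at E
  have E2 := congrArg (fun m => (u*v) • m) E
  simp only [smul_add, smul_sub, smul_zero, smul_inv_smul, smul_smul,
    mul_inv_cancel, one_smul] at E2
  have e1 : u * v * (u * v * (u⁻¹ * u⁻¹)) = v * v := by
    have hC : Commute u v := hcuv
    rw [← mul_assoc, hcuv, hC.mul_mul_mul_comm v u]
    group
  have e2 : u * v * (u * v * (v⁻¹ * v⁻¹)) = u * u := by
    have hC : Commute v u := hcuv.symm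
    rw [← mul_assoc, hC.mul_mul_mul_comm u v]
    group
  rw [e1, e2] at E2
  have hsq : (v*v : Aˣ) • δ a - (u*u : Aˣ) • δ a = (c+d) • δ a - (2:ℂ) • (a • δ a) := by
    rw [Units.smul_def, Units.smul_def, Units.val_mul, Units.val_mul, ← sub_smul]
    have h9 : (v:A)*v - (u:A)*u = (c+d) • (1:A) - ((2:ℂ) • a) := by
      rw [hu, hv, hexp, hexp, hd2]
      module
    rw [h9, sub_smul, smul_assoc, smul_assoc, one_smul]
  rw [hsq] at E2
  have h8 : δ (a*a) - (2:ℂ) • (a • δ a) = 0 := by rw [← E2]; abel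
  exact sub_eq_zero.mp h8
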